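/- arXiv:2207.05667 — 3 statements merged into one kernel-verified Lean document; each statement's English description precedes it below -/
import Mathlib

section
/- Let a⁻ and a⁺ be operators satisfying [a⁻, a⁺] = 1. Then for all natural numbers m, n: [(a⁻)^m, (a⁺)^n] = Σ_{l=1}^{min(m,n)} (−1)^{l+1} l! · C(m,l) · C(n,l) · (a⁻)^{m−l} (a⁺)^{n−l}. -/
open scoped BigOperators

def zc (m n l : ℕ) : ℤ := (-1)^l * (l.factorial * m.choose l * n.choose l : ℕ)

lemma natid (m n l : ℕ) :
    ((l+1).factorial * m.choose (l+1) * (n+1).choose (l+1) : ℤ)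
      = (l+1).factorial * m.choose (l+1) * n.choose (l+1)
        + ((m - l : ℕ) : ℤ) * (l.factorial * m.choose l * n.choose l) := by
  have hc : ((m.choose (l+1) * (l+1) : ℕ) : ℤ) = ((m.choose l * (m - l) : ℕ) : ℤ) := by
    exact_mod_cast congrArg (Nat.cast : ℕ → ℤ) (Nat.choose_succ_right_eq m l)
  rw [Nat.choose_succ_succ n l, Nat.factorial_succ]
  push_cast at hc ⊢
  linear_combination ((l.factorial : ℤ) * n.choose l) * hc

lemma coeff_step (m n l : ℕ) :
    zc m (n+1) (l+1) = zc m n (l+1) - ((m - l : ℕ) : ℤ) * zc m n l := by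
  unfold zc
  have h := natid m n l
  push_cast at h ⊢
  linear_combination ((-1:ℤ)^(l+1)) * h

lemma zc_top (m n : ℕ) : zc m n (n+1) = 0 := by
  simp [zc, Nat.choose_eq_zero_of_lt (Nat.lt_succ_self n)]

section
variable {R : Type*} [Ring R]

lemma L1 (am ap : R) (h : am * ap - ap * am = 1) (k : ℕ) :
    ap * am ^ k = am ^ k * ap - (k : R) * am ^ (k - 1) := by
  have h' : ap * am = am * ap - 1 := by linear_combination (norm := noncomm_ring) -h
  induction k with
  | zero => simp
  | succ k ih =>
    rcases Nat.eq_zero_or_pos k with hk | hk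
    · subst hk
      simpa using h'
    · have hk1 : k - 1 + 1 = k := Nat.succ_pred_eq_of_pos hk
      have : ap * am ^ (k+1) = am ^ k * (am * ap - 1) - (k : R) * am ^ k := by
        calc ap * am ^ (k+1) = (ap * am ^ k) * am := by rw [pow_succ, mul_assoc]
          _ = (am ^ k * ap - (k : R) * am ^ (k-1)) * am := by rw [ih]
          _ = am ^ k * (ap * am) - (k : R) * (am ^ (k-1) * am) := by noncomm_ring
          _ = am ^ k * (am * ap - 1) - (k : R) * am ^ k := by
                rw [h', ← pow_succ, hk1]
      rw [this, Nat.add_sub_cancel]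
      push_cast
      noncomm_ring

lemma key (am ap : R) (h : am * ap - ap * am = 1) (m : ℕ) : ∀ n : ℕ,
    ap ^ n * am ^ m
      = ∑ l ∈ Finset.range (n+1), zc m n l • (am ^ (m - l) * ap ^ (n - l)) := by
  intro n
  induction n with
  | zero => simp [zc]
  | succ n ih =>
    set X : ℕ → R := fun l => am ^ (m - l) * ap ^ (n + 1 - l) with hX
    have step1 : ap ^ (n+1) * am ^ m
        = ∑ l ∈ Finset.range (n+1),
            (zc m n l • X l - (((m - l : ℕ) : ℤ) * zc m n l) • X (l+1)) := by
      rw [pow_succ', mul_assoc, ih, Finset.mul_sum]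
      refine Finset.sum_congr rfl ?_
      intro l hl
      have hln : l ≤ n := Nat.lt_succ_iff.mp (Finset.mem_range.mp hl)
      have e1 : n + 1 - l = (n - l) + 1 := by omega
      have e2 : n + 1 - (l + 1) = n - l := by omega
      have e3 : m - (l + 1) = m - l - 1 := by omega
      rw [mul_smul_comm]
      rw [hX]
      simp only [e1, e2, e3]
      rw [← mul_assoc, L1 am ap h (m - l), sub_mul, mul_assoc, ← pow_succ']
      rw [smul_sub]
      congr 1
      rw [mul_comm ((m - l : ℕ) : ℤ), mul_smul]
      simp [zsmul_eq_mul, mul_assoc]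
    rw [step1]
    set G : ℕ → R := fun j =>
      if j = 0 then 0 else (((m - (j-1) : ℕ) : ℤ) * zc m n (j-1)) • X j with hG
    have h1 : ∑ l ∈ Finset.range (n+1),
        (zc m n l • X l - (((m - l : ℕ) : ℤ) * zc m n l) • X (l+1))
        = ∑ l ∈ Finset.range (n+1), zc m n l • X l
          - ∑ l ∈ Finset.range (n+1), G (l+1) := by
      rw [← Finset.sum_sub_distrib]
      refine Finset.sum_congr rfl fun l _ => ?_
      simp [hG]
    have h2 : ∑ l ∈ Finset.range (n+2), zc m n l • X l
        = ∑ l ∈ Finset.range (n+1), zc m n l • X l := by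
      rw [Finset.sum_range_succ, zc_top, zero_smul, add_zero]
    have h3 : ∑ l ∈ Finset.range (n+1), G (l+1)
        = ∑ j ∈ Finset.range (n+2), G j := by
      rw [Finset.sum_range_succ' G (n+1)]
      simp [hG]
    rw [h1, ← h2, h3, ← Finset.sum_sub_distrib]
    refine Finset.sum_congr rfl fun l _ => ?_
    match l with
    | 0 => simp [hG, hX, zc]
    | Nat.succ j =>
      have : G (j+1) = (((m - j : ℕ) : ℤ) * zc m n j) • X (j+1) := by simp [hG]
      rw [this, coeff_step, sub_smul]
end

/-- Anti-normal ordered higher commutators of ladder operators in a unital ring: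
if `a⁻ a⁺ - a⁺ a⁻ = 1` then
`[(a⁻)^m, (a⁺)^n] = ∑_{l=1}^{min m n} (-1)^{l+1} l! C(m,l) C(n,l) (a⁻)^{m-l} (a⁺)^{n-l}`. -/
theorem ladder_commutator_antinormal {R : Type*} [Ring R] (am ap : R)
    (h : am * ap - ap * am = 1) (m n : ℕ) :
    am ^ m * ap ^ n - ap ^ n * am ^ m =
      ∑ l ∈ Finset.Icc 1 (min m n),
        (-1 : R) ^ (l + 1) * (l.factorial * (m.choose l) * (n.choose l) : ℕ) *
          (am ^ (m - l) * ap ^ (n - l)) := by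
  have hkey := key am ap h m n
  have hA : ∑ l ∈ Finset.Icc 1 (min m n),
        (-1 : R) ^ (l + 1) * (l.factorial * (m.choose l) * (n.choose l) : ℕ) *
          (am ^ (m - l) * ap ^ (n - l))
      = ∑ l ∈ Finset.Icc 1 n,
        (-1 : R) ^ (l + 1) * (l.factorial * (m.choose l) * (n.choose l) : ℕ) *
          (am ^ (m - l) * ap ^ (n - l)) := by
    refine Finset.sum_subset ?_ ?_
    · exact Finset.Icc_subset_Icc_right (Nat.min_le_right m n)
    · intro l hl hnl
      have h1 : l ≤ n := (Finset.mem_Icc.mp hl).2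
      have h2 : m < l := by
        rcases Finset.mem_Icc.mp hl with ⟨ha, hb⟩
        by_contra hc
        exact hnl (Finset.mem_Icc.mpr ⟨ha, le_min (Nat.le_of_not_lt hc) hb⟩)
      rw [Nat.choose_eq_zero_of_lt h2]
      simp
  rw [hA, hkey, Finset.sum_range_succ']
  have h0 : zc m n 0 • (am ^ (m - 0) * ap ^ (n - 0)) = am ^ m * ap ^ n := by
    simp [zc]
  rw [h0, ← Finset.Ico_add_one_right_eq_Icc, Finset.sum_Ico_eq_sum_range]
  simp only [Nat.add_sub_cancel]
  rw [sub_add_eq_sub_sub, sub_right_comm, sub_self, zero_sub, ← Finset.sum_neg_distrib]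
  refine Finset.sum_congr rfl fun l _ => ?_
  rw [zc, zsmul_eq_mul]
  push_cast
  rw [add_comm 1 l, pow_succ (-1 : R) (l + 1)]
  noncomm_ring
end

section
/- Let (S, ω, ⟨·,·⟩) be a finite-dimensional real inner product space with a non-degenerate symplectic form ω, and let E be the invertible operator defined by ω(v₁, v₂) = ⟨v₁, E⁻¹ v₂⟩. Then E is anti-self-adjoint (E* = −E), and writing the polar decomposition E = |E| U* with |E| = √(E*E) = √(−E²) strictly positive and U unitary, the operator J := −U is a complex structure on S, i.e. J² = −1. -/
/-- A symmetric positive injective operator is positive definite. -/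
private lemma pos_def_of_pos_inj
    {S : Type*} [NormedAddCommGroup S] [InnerProductSpace ℝ S]
    (P : S →ₗ[ℝ] S)
    (hsym : ∀ x y : S, (inner ℝ (P x) y : ℝ) = inner ℝ x (P y))
    (hpos : ∀ v : S, (0:ℝ) ≤ inner ℝ v (P v))
    (hinj : Function.Injective P)
    {v : S} (hv : v ≠ 0) : (0:ℝ) < inner ℝ v (P v) := by
  rcases (hpos v).lt_or_eq with h | h
  · exact h
  exfalso
  -- from ⟪v, P v⟫ = 0 deduce P v = 0
  set b : ℝ := inner ℝ (P v) (P v) with hb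
  set a : ℝ := inner ℝ (P v) (P (P v)) with ha
  have ha0 : 0 ≤ a := hpos (P v)
  have key : ∀ t : ℝ, 0 ≤ 2 * t * b + t ^ 2 * a := by
    intro t
    have h1 := hpos (v + t • P v)
    have expand : (inner ℝ (v + t • P v) (P (v + t • P v)) : ℝ)
        = inner ℝ v (P v) + 2 * t * b + t ^ 2 * a := by
      have hsw : (inner ℝ v (P (P v)) : ℝ) = b := by rw [hb, hsym]
      simp only [map_add, map_smul, inner_add_left, inner_add_right,
        real_inner_smul_left, real_inner_smul_right, hsw]
      ring
    rw [expand, ← h] at h1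
    linarith
  have hbt := key (-b / (a + 1))
  have hb0 : 0 ≤ b := real_inner_self_nonneg
  have hb' : b = 0 := by
    have ha1 : (0:ℝ) < a + 1 := by linarith
    have ha1' : a + 1 ≠ 0 := ne_of_gt ha1
    field_simp at hbt
    have hD : (0:ℝ) < (a + 1) * (a + 1) ^ 2 := by positivity
    nlinarith
  have hPv : P v = 0 := by
    rw [hb] at hb'
    exact inner_self_eq_zero.mp hb'
  exact hv (hinj (by simpa using hPv))

/-- On a finite-dimensional real inner ℝ product space `S` with a non-degenerate antisymmetric
bilinear form `ω`, let `E` be the bijective operator with `ω v₁ v₂ = ⟪v₁, E⁻¹ v₂⟫`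
(equivalently `ω v (E w) = ⟪v, w⟫`).  Then `E* = -E`, and for any polar decomposition
`E = P ∘ U*` with `P` the positive square root of `E* E` and `U` unitary, the operator
`J = -U` is a complex structure: `J ∘ J = -1`. -/
theorem antiselfadjoint_and_complex_structure
    {S : Type*} [NormedAddCommGroup S] [InnerProductSpace ℝ S] [FiniteDimensional ℝ S]
    (ω : S →ₗ[ℝ] S →ₗ[ℝ] ℝ) (hanti : ∀ v w : S, ω v w = - ω w v)
    (E : S →ₗ[ℝ] S) (hE : Function.Bijective E)
    (hωE : ∀ v w : S, ω v (E w) = inner ℝ v w) :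
    LinearMap.adjoint E = -E ∧
      ∀ P U : S →ₗ[ℝ] S,
        LinearMap.adjoint P = P →
        (∀ v : S, (0:ℝ) ≤ inner ℝ v (P v)) →
        P ∘ₗ P = LinearMap.adjoint E ∘ₗ E →
        LinearMap.adjoint U ∘ₗ U = LinearMap.id →
        U ∘ₗ LinearMap.adjoint U = LinearMap.id →
        E = P ∘ₗ LinearMap.adjoint U →
        (-U) ∘ₗ (-U) = -(LinearMap.id : S →ₗ[ℝ] S) := by
  -- key anti-symmetry relation
  have key : ∀ u w : S, (inner ℝ (E u) w : ℝ) = - inner ℝ (E w) u := by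
    intro u w
    have h1 : ω (E u) (E w) = inner ℝ (E u) w := hωE (E u) w
    have h2 : ω (E w) (E u) = inner ℝ (E w) u := hωE (E w) u
    have h3 := hanti (E u) (E w)
    rw [h1, h2] at h3
    exact h3
  have hadj : LinearMap.adjoint E = -E := by
    symm
    rw [LinearMap.eq_adjoint_iff]
    intro x y
    rw [LinearMap.neg_apply, inner_neg_left, key x y, neg_neg]
    exact real_inner_comm _ _
  refine ⟨hadj, ?_⟩
  intro P U hPsa hPpos hPP hU1 hU2 hEPU
  -- P is injective
  have hPinj : Function.Injective P := by
    intro x y hxy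
    have h2 : (P ∘ₗ P) x = (P ∘ₗ P) y := by simp [LinearMap.comp_apply, hxy]
    rw [hPP, hadj] at h2
    simp only [LinearMap.comp_apply, LinearMap.neg_apply, neg_inj] at h2
    exact hE.injective (hE.injective h2)
  -- relation U ∘ P = -(P ∘ U*)
  have R1 : U ∘ₗ P = -(P ∘ₗ LinearMap.adjoint U) := by
    have h1 : LinearMap.adjoint E = LinearMap.adjoint (P ∘ₗ LinearMap.adjoint U) := by
      rw [← hEPU]
    rw [hadj, hEPU] at h1
    rw [LinearMap.adjoint_comp, LinearMap.adjoint_adjoint, hPsa] at h1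
    exact h1.symm
  -- hence P ∘ U = -(U* ∘ P)
  have R2 : P ∘ₗ U = -(LinearMap.adjoint U ∘ₗ P) := by
    have h1 : LinearMap.adjoint U ∘ₗ (U ∘ₗ P) ∘ₗ U
        = LinearMap.adjoint U ∘ₗ (-(P ∘ₗ LinearMap.adjoint U)) ∘ₗ U := by rw [R1]
    calc P ∘ₗ U = (LinearMap.adjoint U ∘ₗ U) ∘ₗ P ∘ₗ U := by rw [hU1]; ext x; simp
    _ = LinearMap.adjoint U ∘ₗ (U ∘ₗ P) ∘ₗ U := by ext x; simp
    _ = LinearMap.adjoint U ∘ₗ (-(P ∘ₗ LinearMap.adjoint U)) ∘ₗ U := h1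
    _ = -((LinearMap.adjoint U ∘ₗ P) ∘ₗ (LinearMap.adjoint U ∘ₗ U)) := by
        ext x; simp
    _ = -(LinearMap.adjoint U ∘ₗ P) := by rw [hU1]; ext x; simp
  -- B = U + U* is symmetric and anticommutes with P
  set B : S →ₗ[ℝ] S := U + LinearMap.adjoint U with hB
  have hBsa : LinearMap.adjoint B = B := by
    rw [hB, map_add, LinearMap.adjoint_adjoint, add_comm]
  have hBsym : LinearMap.IsSymmetric B := by
    rw [LinearMap.isSymmetric_iff_isSelfAdjoint, LinearMap.isSelfAdjoint_iff']
    exact hBsa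
  have hanticomm : ∀ x : S, B (P x) = -(P (B x)) := by
    intro x
    have h1 : (U ∘ₗ P) x = (-(P ∘ₗ LinearMap.adjoint U)) x := by rw [R1]
    have h2 : (LinearMap.adjoint U ∘ₗ P) x = (-(P ∘ₗ U)) x := by
      rw [show LinearMap.adjoint U ∘ₗ P = -(P ∘ₗ U) by rw [R2]; simp]
    simp only [LinearMap.comp_apply, LinearMap.neg_apply] at h1 h2
    simp [hB, LinearMap.add_apply, h1, h2, map_add]
  -- symmetry of P as a bilinear relation
  have hPsym : ∀ x y : S, (inner ℝ (P x) y : ℝ) = inner ℝ x (P y) := by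
    intro x y
    conv_lhs => rw [← hPsa]
    exact LinearMap.adjoint_inner_left P y x
  -- B = 0 via spectral theorem
  have hBzero : B = 0 := by
    have hn : Module.finrank ℝ S = Module.finrank ℝ S := rfl
    set bb := hBsym.eigenvectorBasis hn with hbb
    apply bb.toBasis.ext
    intro i
    have heig : B (bb i) = hBsym.eigenvalues hn i • bb i := by
      have h := hBsym.apply_eigenvectorBasis hn i
      exact_mod_cast h
    have hne : bb i ≠ 0 := bb.toBasis.ne_zero i
    have hposd : (0:ℝ) < inner ℝ (bb i) (P (bb i)) :=
      pos_def_of_pos_inj P hPsym hPpos hPinj hne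
    -- μ * c = -(μ * c)
    have hc1 : (inner ℝ (B (bb i)) (P (bb i)) : ℝ)
        = hBsym.eigenvalues hn i * inner ℝ (bb i) (P (bb i)) := by
      rw [heig, real_inner_smul_left]
    have hc2 : (inner ℝ (B (bb i)) (P (bb i)) : ℝ)
        = -(hBsym.eigenvalues hn i * inner ℝ (bb i) (P (bb i))) := by
      rw [hBsym (bb i) (P (bb i)), hanticomm, inner_neg_right, heig, map_smul,
        real_inner_smul_right]
    have hmu : hBsym.eigenvalues hn i = 0 := by
      have := hc1.symm.trans hc2
      nlinarith
    simp [heig, hmu]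
  -- conclude
  have hUadj : LinearMap.adjoint U = -U := by
    have : U + LinearMap.adjoint U = 0 := hBzero
    linear_combination (norm := module) this
  have hUU : U ∘ₗ U = -LinearMap.id := by
    have h1 : U ∘ₗ LinearMap.adjoint U = LinearMap.id := hU2
    rw [hUadj] at h1
    have : -(U ∘ₗ U) = LinearMap.id := by rw [← h1]; ext x; simp
    linear_combination (norm := module) -this
  calc (-U) ∘ₗ (-U) = U ∘ₗ U := by ext x; simp
  _ = -LinearMap.id := hUU
end

section
/- Let E be a real, invertible, antisymmetric operator on a finite-dimensional real inner product space, extended to the complexification. Then the unique operator A satisfying (i) A ≥ 0, (ii) A − Ā = iE, and (iii) A·Ā = 0 (where Ā is the entrywise complex conjugate, equal to A with E replaced by −E) is A = (1/2)(|E| + iE). -/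
open Matrix
open scoped ComplexOrder

lemma sj_conjTranspose_real {n : ℕ} (X : Matrix (Fin n) (Fin n) ℝ) : Xᴴ = Xᵀ := by
  ext i j; simp [conjTranspose_apply]

lemma sj_eq_of_sq_eq_sq {n : ℕ} {𝕜 : Type*} [RCLike 𝕜] {A B : Matrix (Fin n) (Fin n) 𝕜}
    (hA : A.PosSemidef) (hB : B.PosSemidef) (h : A ^ 2 = B ^ 2) : A = B := by
  open scoped MatrixOrder in exact (CFC.sq_eq_sq_iff A B hA.nonneg hB.nonneg).mp h

lemma sj_posSemidef_of_eigenvalues_nonneg {n : ℕ} {A : Matrix (Fin n) (Fin n) ℂ}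
    (hA : A.IsHermitian) (h : ∀ i, 0 ≤ hA.eigenvalues i) : A.PosSemidef :=
  hA.posSemidef_iff_eigenvalues_nonneg.mpr h

lemma sj_posSemidef_map {n : ℕ} {P : Matrix (Fin n) (Fin n) ℝ} (hP : P.PosSemidef) :
    (P.map Complex.ofReal).PosSemidef := by
  obtain ⟨B, hB⟩ : ∃ B : Matrix (Fin n) (Fin n) ℝ, P = Bᴴ * B := by
    open scoped MatrixOrder in exact CStarAlgebra.nonneg_iff_eq_star_mul_self.mp hP.nonneg
  have hmap : P.map Complex.ofReal = (B.map Complex.ofReal)ᴴ * (B.map Complex.ofReal) := by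
    rw [hB]
    rw [show (Bᴴ * B).map Complex.ofReal
        = Complex.ofRealHom.mapMatrix Bᴴ * Complex.ofRealHom.mapMatrix B from
      map_mul Complex.ofRealHom.mapMatrix Bᴴ B]
    congr 1
    ext i j
    simp [RingHom.mapMatrix_apply, conjTranspose_apply, Matrix.map_apply, Complex.conj_ofReal]
  rw [hmap]
  exact posSemidef_conjTranspose_mul_self _

lemma sj_comm {n : ℕ} {E P : Matrix (Fin n) (Fin n) ℝ} (hEanti : Eᵀ = -E) (hEinv : IsUnit E)
    (hPpos : P.PosSemidef) (hPsq : P * P = -(E * E)) : P * E = E * P := by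
  have hE2 : E * E = -(P * P) := by rw [hPsq, neg_neg]
  have hc : E * (P * P) = (P * P) * E := by
    rw [hPsq, mul_neg, neg_mul, ← mul_assoc, mul_assoc]
  have hS : (E * P * Eᵀ).PosSemidef := by
    have := hPpos.mul_mul_conjTranspose_same E
    rwa [sj_conjTranspose_real] at this
  have hP3 : (P * P * P).PosSemidef := by
    have := hPpos.pow 3
    rwa [pow_succ, pow_two] at this
  have hsq : (E * P * Eᵀ) ^ 2 = (P * P * P) ^ 2 := by
    rw [pow_two, pow_two, hEanti]
    calc E * P * -E * (E * P * -E)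
        = E * (P * (E * E) * P) * E := by noncomm_ring
      _ = E * (P * -(P * P) * P) * E := by rw [hE2]
      _ = -((E * (P * P)) * ((P * P) * E)) := by noncomm_ring
      _ = -(((P * P) * E) * ((P * P) * E)) := by rw [hc]
      _ = -((P * P) * (E * (P * P)) * E) := by noncomm_ring
      _ = -((P * P) * ((P * P) * E) * E) := by rw [hc]
      _ = -((P * P) * (P * P) * (E * E)) := by noncomm_ring
      _ = -((P * P) * (P * P) * -(P * P)) := by rw [hE2]
      _ = P * P * P * (P * P * P) := by noncomm_ring
  have hSeq : E * P * Eᵀ = P * P * P := sj_eq_of_sq_eq_sq hS hP3 hsq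
  have hEPE : E * P * E = -(P * P * P) := by
    have : E * P * -E = P * P * P := by rw [← hEanti]; exact hSeq
    rw [← this]; noncomm_ring
  have hE'E : (↑hEinv.unit⁻¹ : Matrix (Fin n) (Fin n) ℝ) * E = 1 := hEinv.val_inv_mul
  have hkey : (↑hEinv.unit⁻¹ : Matrix (Fin n) (Fin n) ℝ) * (P * P) = -E := by
    rw [hPsq, mul_neg, ← mul_assoc, hE'E, one_mul]
  calc P * E = (↑hEinv.unit⁻¹ : Matrix (Fin n) (Fin n) ℝ) * E * (P * E) := by
        rw [hE'E, one_mul]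
    _ = ↑hEinv.unit⁻¹ * (E * P * E) := by noncomm_ring
    _ = ↑hEinv.unit⁻¹ * -(P * P * P) := by rw [hEPE]
    _ = -((↑hEinv.unit⁻¹ * (P * P)) * P) := by noncomm_ring
    _ = -(-E * P) := by rw [hkey]
    _ = E * P := by noncomm_ring

lemma sj_psd_aux {n : ℕ} {A Q : Matrix (Fin n) (Fin n) ℂ}
    (hA : A.IsHermitian) (hQ : Q.PosSemidef) (h : A * A = Q * A) : A.PosSemidef := by
  apply sj_posSemidef_of_eigenvalues_nonneg hA
  intro i
  set t := hA.eigenvalues i with ht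
  set v : Fin n → ℂ := ⇑(hA.eigenvectorBasis i) with hv
  have hev : A *ᵥ v = t • v := hA.mulVec_eigenvectorBasis i
  have hvne : v ≠ 0 := by
    intro h0
    apply hA.eigenvectorBasis.orthonormal.ne_zero i
    ext j
    exact congrFun h0 j
  by_cases htz : t = 0
  · rw [htz]
  · have h1 : Q *ᵥ (t • v) = t • (t • v) := by
      calc Q *ᵥ (t • v) = Q *ᵥ (A *ᵥ v) := by rw [hev]
        _ = (Q * A) *ᵥ v := by rw [mulVec_mulVec]
        _ = (A * A) *ᵥ v := by rw [h]
        _ = A *ᵥ (A *ᵥ v) := by rw [mulVec_mulVec]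
        _ = A *ᵥ (t • v) := by rw [hev]
        _ = t • (A *ᵥ v) := by rw [mulVec_smul]
        _ = t • (t • v) := by rw [hev]
    have h2 : Q *ᵥ v = t • v := by
      have := h1
      rw [mulVec_smul] at this
      exact smul_right_injective _ htz this
    have h3 : (0:ℂ) ≤ star v ⬝ᵥ (Q *ᵥ v) := hQ.dotProduct_mulVec_nonneg v
    rw [h2] at h3
    have h4 : star v ⬝ᵥ (t • v) = (t : ℂ) * (star v ⬝ᵥ v) := by
      rw [dotProduct_smul]
      simp [Complex.real_smul]
    rw [h4] at h3
    have h5 : (0:ℂ) < star v ⬝ᵥ v := dotProduct_star_self_pos_iff.mpr hvne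
    set z := star v ⬝ᵥ v with hz
    have hre : 0 < z.re ∧ z.im = 0 := by
      rw [Complex.lt_def] at h5
      exact ⟨by simpa using h5.1, by simpa using h5.2.symm⟩
    have hzr : z = (z.re : ℂ) := by
      apply Complex.ext <;> simp [hre.2]
    rw [hzr] at h3
    have h6 : (0:ℂ) ≤ ((t * z.re : ℝ) : ℂ) := by push_cast; exact h3
    have h7 : 0 ≤ t * z.re := by exact_mod_cast h6
    nlinarith [hre.1]

/-- Sorkin–Johnston axioms: for a real, invertible, antisymmetric matrix `E` with positive
square root `P` of `EᵀE = -E²`, the unique complex matrix `A` that is positive semidefinite,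
satisfies `A - Ā = i E` and `A Ā = 0`, is `A = ½ (P + i E)`. -/
theorem sorkin_johnston_unique_solution {n : ℕ} (E P : Matrix (Fin n) (Fin n) ℝ)
    (hEanti : Eᵀ = -E) (hEinv : IsUnit E)
    (hPpos : P.PosSemidef) (hPsq : P * P = -(E * E)) :
    ∀ A : Matrix (Fin n) (Fin n) ℂ,
      (A.PosSemidef ∧
        A - A.map (starRingEnd ℂ) = Complex.I • E.map (Complex.ofReal) ∧
        A * A.map (starRingEnd ℂ) = 0)
      ↔ A = (1 / 2 : ℂ) • (P.map (Complex.ofReal) + Complex.I • E.map (Complex.ofReal)) := by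
  classical
  intro A
  set Pc : Matrix (Fin n) (Fin n) ℂ := P.map Complex.ofReal with hPcdef
  set Ec : Matrix (Fin n) (Fin n) ℂ := E.map Complex.ofReal with hEcdef
  have hmul : ∀ X Y : Matrix (Fin n) (Fin n) ℝ,
      (X * Y).map Complex.ofReal = X.map Complex.ofReal * Y.map Complex.ofReal :=
    fun X Y => map_mul Complex.ofRealHom.mapMatrix X Y
  have hPc2 : Pc * Pc = -(Ec * Ec) := by
    rw [hPcdef, hEcdef, ← hmul, ← hmul, hPsq]
    ext i j; simp [Matrix.map_apply]
  have hcm : Pc * Ec = Ec * Pc := by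
    rw [hPcdef, hEcdef, ← hmul, ← hmul, sj_comm hEanti hEinv hPpos hPsq]
  have hPsymm : ∀ i j, P j i = P i j := by
    intro i j
    have := congrFun (congrFun hPpos.1 i) j
    simpa [conjTranspose_apply] using this
  have hEskew : ∀ i j, E j i = -E i j := by
    intro i j
    have := congrFun (congrFun hEanti i) j
    simpa [transpose_apply] using this
  have hPcpsd : Pc.PosSemidef := sj_posSemidef_map hPpos
  constructor
  · rintro ⟨hA, h2, h3⟩
    -- conjugate is the transpose
    have hAbar : A.map (starRingEnd ℂ) = Aᵀ := by
      ext i j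
      have h := congrFun (congrFun hA.1 j) i
      rw [conjTranspose_apply] at h
      simpa [Matrix.map_apply, transpose_apply] using h
    rw [hAbar] at h2 h3
    -- Aᵀ * A = 0 by conjugating h3
    have h3' : Aᵀ * A = 0 := by
      have := congrArg (fun M : Matrix (Fin n) (Fin n) ℂ => M.map (starRingEnd ℂ)) h3
      rw [show (A * Aᵀ).map (starRingEnd ℂ)
            = A.map (starRingEnd ℂ) * Aᵀ.map (starRingEnd ℂ) from
          map_mul (starRingEnd ℂ).mapMatrix A Aᵀ, hAbar] at this
      have hAbarT : Aᵀ.map (starRingEnd ℂ) = A := by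
        ext i j
        have h := congrFun (congrFun hA.1 i) j
        rw [conjTranspose_apply] at h
        simpa [Matrix.map_apply, transpose_apply] using h
      rw [hAbarT] at this
      simpa using this
    -- H := A + Aᵀ is PSD
    have hHpsd : (A + Aᵀ).PosSemidef := by
      apply PosSemidef.of_dotProduct_mulVec_nonneg
      · exact hA.1.add hA.transpose.1
      · intro x
        have := hA.dotProduct_mulVec_nonneg x
        have := hA.transpose.dotProduct_mulVec_nonneg x
        rw [add_mulVec, dotProduct_add]
        exact add_nonneg (hA.dotProduct_mulVec_nonneg x) (hA.transpose.dotProduct_mulVec_nonneg x)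
    -- H ^ 2 = Pc ^ 2
    have hH2 : (A + Aᵀ) ^ 2 = Pc ^ 2 := by
      have e1 : (A + Aᵀ) * (A + Aᵀ) = A * A + Aᵀ * Aᵀ := by
        rw [add_mul, mul_add, mul_add, h3, h3']
        abel
      have e2 : (A - Aᵀ) * (A - Aᵀ) = A * A + Aᵀ * Aᵀ := by
        rw [sub_mul, mul_sub, mul_sub, h3, h3']
        abel
      have e3 : (A - Aᵀ) * (A - Aᵀ) = -(Ec * Ec) := by
        rw [h2, Matrix.smul_mul, Matrix.mul_smul, smul_smul, Complex.I_mul_I]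
        simp
      rw [pow_two, pow_two, e1, ← e2, e3, ← hPc2]
    have hHP : A + Aᵀ = Pc := sj_eq_of_sq_eq_sq hHpsd hPcpsd hH2
    -- conclude
    have : A = (1 / 2 : ℂ) • ((A + Aᵀ) + (A - Aᵀ)) := by
      rw [show (A + Aᵀ) + (A - Aᵀ) = (2:ℂ) • A by module, smul_smul]
      norm_num
    rw [this, hHP, h2]
  · rintro rfl
    set A := (1 / 2 : ℂ) • (Pc + Complex.I • Ec) with hAdef
    have hconj : A.map (starRingEnd ℂ) = (1 / 2 : ℂ) • (Pc - Complex.I • Ec) := by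
      ext i j
      simp only [hAdef, Matrix.map_apply, Matrix.smul_apply, Matrix.add_apply, Matrix.sub_apply,
        hPcdef, hEcdef, smul_eq_mul, _root_.map_mul, _root_.map_add, _root_.map_sub,
        Complex.conj_ofReal, map_ofNat, _root_.map_one, Complex.conj_I, map_div₀]
      ring
    have hherm : A.IsHermitian := by
      ext i j
      simp only [hAdef, conjTranspose_apply, Matrix.smul_apply, Matrix.add_apply,
        hPcdef, hEcdef, Matrix.map_apply, smul_eq_mul, RCLike.star_def, _root_.map_mul,
        _root_.map_add, Complex.conj_ofReal, Complex.conj_I, map_div₀, _root_.map_one, map_ofNat]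
      rw [hPsymm i j, hEskew i j]
      push_cast
      ring
    have hE2c : Ec * Ec = -(Pc * Pc) := by rw [hPc2, neg_neg]
    refine ⟨?_, ?_, ?_⟩
    · -- positive semidefinite
      have hAA : A * A = Pc * A := by
        have expand : (Pc + Complex.I • Ec) * (Pc + Complex.I • Ec)
            = (2:ℂ) • (Pc * (Pc + Complex.I • Ec)) := by
          rw [add_mul, mul_add, mul_add, Matrix.smul_mul, Matrix.mul_smul, Matrix.mul_smul,
            Matrix.smul_mul, smul_smul, Complex.I_mul_I, hcm, hE2c]
          module
        rw [hAdef, Matrix.smul_mul, Matrix.mul_smul, expand, Matrix.mul_smul]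
        module
      exact sj_psd_aux hherm hPcpsd hAA
    · rw [hconj, hAdef]
      module
    · have expand : (Pc + Complex.I • Ec) * (Pc - Complex.I • Ec) = 0 := by
        rw [mul_sub, add_mul, add_mul, Matrix.smul_mul, Matrix.mul_smul, Matrix.mul_smul,
          Matrix.smul_mul, smul_smul, Complex.I_mul_I, hcm, hE2c]
        module
      rw [hconj, hAdef, Matrix.smul_mul, Matrix.mul_smul, expand, smul_zero, smul_zero]
end
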